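/- Suppose the quadratic F(x) = a₂x² + a₁x + a₀ with integer coefficients, 0 < a₂ < 2^{n+1}, has two non-real complex conjugate roots α₁ = ᾱ₂. If there exists x ∈ [0,1] with |F(x)| < ψ(2ⁿ) and ψ(2ⁿ) < 2^{-2n}, with the distances |x - α₁|, |x - α₂| each at most 2ψ(2ⁿ)/|F'(α₁)| where |F'(α₁)| ≥ 1, then 1/a₂ ≤ 4ψ(2ⁿ) < 4·2^{-2n}, which is impossible when n is sufficiently large (since 1/a₂ > 2^{-(n+1)}). -/

import Mathlib

open Complex in
/-- An integer quadratic `F(x) = a₂x² + a₁x + a₀` with `0 < a₂ < 2^{n+1}` and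
two non-real complex conjugate roots `α₁ = ᾱ₂` cannot satisfy `|F(x)| < ψ(2ⁿ)` at a point
`x ∈ [0,1]` (with the stated distance bounds and `ψ(2ⁿ) < 2^{-2n}`) unless `n` is small:
one gets `1/a₂ ≤ 4ψ(2ⁿ) < 4·2^{-2n}`, and since `1/a₂ > 2^{-(n+1)}` this forces `n < 3`. -/
theorem stmt6 (n : ℕ) (a₀ a₁ a₂ : ℤ) (ha₂ : 0 < a₂) (ha₂' : a₂ < 2 ^ (n + 1))
    (α₁ α₂ : ℂ)
    (hroot₁ : (a₂ : ℂ) * α₁ ^ 2 + (a₁ : ℂ) * α₁ + (a₀ : ℂ) = 0)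
    (hroot₂ : (a₂ : ℂ) * α₂ ^ 2 + (a₁ : ℂ) * α₂ + (a₀ : ℂ) = 0)
    (hconj : α₁ = (starRingEnd ℂ) α₂) (him : α₁.im ≠ 0)
    (ψn : ℝ) (hψpos : 0 < ψn) (hψ : ψn < (2 : ℝ) ^ (-(2 * n : ℤ)))
    (x : ℝ) (hx : x ∈ Set.Icc (0 : ℝ) 1)
    (hFx : |(a₂ : ℝ) * x ^ 2 + (a₁ : ℝ) * x + (a₀ : ℝ)| < ψn)
    (hder : 1 ≤ ‖2 * (a₂ : ℂ) * α₁ + (a₁ : ℂ)‖)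
    (hd₁ : ‖(x : ℂ) - α₁‖ ≤ 2 * ψn / ‖2 * (a₂ : ℂ) * α₁ + (a₁ : ℂ)‖)
    (hd₂ : ‖(x : ℂ) - α₂‖ ≤ 2 * ψn / ‖2 * (a₂ : ℂ) * α₁ + (a₁ : ℂ)‖) :
    (1 : ℝ) / (a₂ : ℝ) ≤ 4 * ψn ∧ 4 * ψn < 4 * (2 : ℝ) ^ (-(2 * n : ℤ)) ∧ n < 3 := by

  have hane : (a₂:ℂ) ≠ 0 := by exact_mod_cast ha₂.ne'
  have hne : α₁ - α₂ ≠ 0 := by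
    intro h
    have h2 : α₁ = α₂ := sub_eq_zero.mp h
    rw [hconj] at h2
    have h3 := congrArg Complex.im h2
    simp [Complex.conj_im] at h3
    apply him
    rw [hconj, Complex.conj_im]
    simp only [neg_eq_zero]
    linarith
  have hfac : (α₁ - α₂) * ((a₂:ℂ) * (α₁ + α₂) + a₁) = 0 := by
    linear_combination hroot₁ - hroot₂
  have hsum : (a₂:ℂ) * (α₁ + α₂) + a₁ = 0 := by
    rcases mul_eq_zero.mp hfac with h | h
    · exact absurd h hne
    · exact h
  have hprod : (a₂:ℂ) * (α₁ * α₂) = a₀ := by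
    linear_combination α₁ * hsum - hroot₁
  have hD : ((a₁^2 - 4*a₀*a₂ : ℤ) : ℂ) = (a₂:ℂ)^2 * (α₁ - α₂)^2 := by
    push_cast
    linear_combination (a₁ - (a₂:ℂ)*(α₁+α₂)) * hsum + 4*(a₂:ℂ) * hprod
  have hDne : (a₁^2 - 4*a₀*a₂ : ℤ) ≠ 0 := by
    intro h
    rw [h] at hD
    simp only [Int.cast_zero] at hD
    have := (mul_eq_zero.mp hD.symm)
    rcases this with h | h
    · exact hane (pow_eq_zero_iff (by norm_num) |>.mp h)
    · exact hne (pow_eq_zero_iff (by norm_num) |>.mp h)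
  have hDabs : (1:ℝ) ≤ |((a₁^2 - 4*a₀*a₂ : ℤ) : ℝ)| := by
    rw [← Int.cast_abs]
    exact_mod_cast Int.one_le_abs hDne
  set s := ‖α₁ - α₂‖ with hs
  have hseq : (a₂:ℝ)^2 * s^2 = |((a₁^2 - 4*a₀*a₂ : ℤ) : ℝ)| := by
    have := congrArg (‖·‖) hD
    rw [norm_mul, norm_pow, norm_pow, Complex.norm_intCast] at this
    rw [this, Complex.norm_intCast, abs_of_pos (by exact_mod_cast ha₂ : (0:ℝ) < (a₂:ℝ))]
  have ha₂R : (0:ℝ) < (a₂:ℝ) := by exact_mod_cast ha₂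
  have hspos : 0 < s := by
    simpa [hs] using (norm_pos_iff.mpr hne)
  have hs1 : 1 / (a₂:ℝ) ≤ s := by
    rw [div_le_iff₀ ha₂R]
    nlinarith [hseq, hDabs, hspos, ha₂R, mul_pos hspos ha₂R, sq_nonneg (s * (a₂:ℝ) - 1), sq_nonneg (s * (a₂:ℝ) + 1)]
  set A := ‖2 * (a₂ : ℂ) * α₁ + (a₁ : ℂ)‖ with hA
  have htri : s ≤ ‖(x:ℂ) - α₁‖ + ‖(x:ℂ) - α₂‖ := by
    have he : α₁ - α₂ = -((x:ℂ) - α₁) + ((x:ℂ) - α₂) := by ring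
    rw [hs, he]
    calc ‖-((x:ℂ) - α₁) + ((x:ℂ) - α₂)‖
        ≤ ‖-((x:ℂ) - α₁)‖ + ‖(x:ℂ) - α₂‖ := norm_add_le _ _
      _ = ‖(x:ℂ) - α₁‖ + ‖(x:ℂ) - α₂‖ := by rw [norm_neg]
  have hdiv : 2 * ψn / A ≤ 2 * ψn := div_le_self (by linarith) hder
  have part1 : 1 / (a₂:ℝ) ≤ 4 * ψn := by
    have : s ≤ 4 * ψn := by
      calc s ≤ ‖(x:ℂ) - α₁‖ + ‖(x:ℂ) - α₂‖ := htri
        _ ≤ 2 * ψn / A + 2 * ψn / A := add_le_add hd₁ hd₂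
        _ ≤ 2 * ψn + 2 * ψn := add_le_add hdiv hdiv
        _ = 4 * ψn := by ring
    linarith
  refine ⟨part1, by linarith, ?_⟩
  have h1 : (2:ℝ) ^ (-(n+1:ℤ)) < 1 / (a₂:ℝ) := by
    rw [zpow_neg, ← one_div]
    apply one_div_lt_one_div_of_lt ha₂R
    rw [show ((n:ℤ)+1) = ((n+1 : ℕ) : ℤ) by push_cast; ring, zpow_natCast]
    exact_mod_cast ha₂'
  have h2 : (2:ℝ) ^ (-(n+1:ℤ)) < (2:ℝ)^(2 - 2*(n:ℤ)) := by
    have h4 : 4 * (2:ℝ) ^ (-(2 * n : ℤ)) = (2:ℝ)^(2 - 2*(n:ℤ)) := by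
      rw [zpow_sub₀ (by norm_num)]
      norm_num
      ring
    calc (2:ℝ) ^ (-(n+1:ℤ)) < 1 / (a₂:ℝ) := h1
      _ ≤ 4 * ψn := part1
      _ < 4 * (2:ℝ) ^ (-(2 * n : ℤ)) := by linarith
      _ = (2:ℝ)^(2 - 2*(n:ℤ)) := h4
  have h3 : (-(n+1:ℤ)) < 2 - 2*(n:ℤ) := by
    exact_mod_cast (zpow_lt_zpow_iff_right₀ (by norm_num : (1:ℝ) < 2)).mp h2
  omega
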